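/- Let T be a Kock–Zöberlein monad on a poset-enriched category A, with induced comonad T̄ on Alg(T). Given an algebra a : TX → X and an algebra morphism c : a → T̄(a) (i.e., c : X → TX with c ∘ a = μ ∘ T(c)), the following are equivalent: (1) c is an Eilenberg–Moore coalgebra for T̄ (a ∘ c = id and T(η) ∘ c = T(c) ∘ c); (2) c is a left adjoint right inverse of the counit a, i.e., a ∘ c = id and c ∘ a ≤ id. -/
import Mathlib


open CategoryTheory

/-- Let `T` be a Kock–Zöberlein monad on a poset-enriched category, with induced comonad
`T̄` on `Alg(T)`. Given an algebra `a : TX → X` and a morphism of algebras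
`c : a → T̄(a)` (a map `c : X → TX` with `c ∘ a = μ ∘ T(c)`), the following are
equivalent: (1) `c` is an Eilenberg–Moore coalgebra for `T̄`, i.e. `a ∘ c = id` and
`T(η) ∘ c = T(c) ∘ c`; (2) `c` is a left-adjoint-right-inverse of the counit `a`,
i.e. `a ∘ c = id` and `c ∘ a ≤ id`. -/
theorem bases_as_coalgebras_stmt12 {A : Type u} [Category.{v} A]
    [∀ X Y : A, PartialOrder (X ⟶ Y)]
    (comp_mono : ∀ {X Y Z : A} (f g : X ⟶ Y) (h k : Y ⟶ Z),
      f ≤ g → h ≤ k → f ≫ h ≤ g ≫ k)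
    (T : Monad A)
    (T_mono : ∀ {X Y : A} (f g : X ⟶ Y), f ≤ g → T.map f ≤ T.map g)
    (KZ : ∀ X : A, T.map (T.η.app X) ≤ T.η.app (T.obj X))
    (X : A) (a : T.obj X ⟶ X)
    (ha1 : T.η.app X ≫ a = 𝟙 X)
    (ha2 : T.map a ≫ a = T.μ.app X ≫ a)
    (c : X ⟶ T.obj X)
    (hc : a ≫ c = T.map c ≫ T.μ.app X) :
    (c ≫ a = 𝟙 X ∧ c ≫ T.map (T.η.app X) = c ≫ T.map c) ↔
    (c ≫ a = 𝟙 X ∧ a ≫ c ≤ 𝟙 (T.obj X)) := by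
  -- key lemma: 𝟙 ≤ a ≫ η
  have key : 𝟙 (T.obj X) ≤ a ≫ T.η.app X := by
    have h1 : a ≫ T.η.app X = T.η.app (T.obj X) ≫ T.map a := by simpa using T.η.naturality a
    have h2 : T.map (T.η.app X) ≫ T.map a ≤ T.η.app (T.obj X) ≫ T.map a :=
      comp_mono _ _ _ _ (KZ X) le_rfl
    calc 𝟙 (T.obj X) = T.map (T.η.app X) ≫ T.map a := by
            simp [← T.map_comp, ha1]
      _ ≤ T.η.app (T.obj X) ≫ T.map a := h2
      _ = a ≫ T.η.app X := h1.symm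
  -- lemma: μ ≫ T η ≤ 𝟙
  have muTeta : T.μ.app X ≫ T.map (T.η.app X) ≤ 𝟙 (T.obj (T.obj X)) := by
    have h1 : T.map (T.map (T.η.app X)) ≫ T.μ.app (T.obj X)
        = T.μ.app X ≫ T.map (T.η.app X) := T.μ.naturality (T.η.app X)
    calc T.μ.app X ≫ T.map (T.η.app X)
        = T.map (T.map (T.η.app X)) ≫ T.μ.app (T.obj X) := h1.symm
      _ ≤ T.map (T.η.app (T.obj X)) ≫ T.μ.app (T.obj X) :=
          comp_mono _ _ _ _ (T_mono _ _ (KZ X)) le_rfl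
      _ = 𝟙 _ := T.right_unit (T.obj X)
  -- lemma: μ ≤ T a
  have muTa : T.μ.app X ≤ T.map a := by
    have h1 : 𝟙 (T.obj (T.obj X)) ≤ T.map a ≫ T.η.app (T.obj X) := by
      calc 𝟙 (T.obj (T.obj X)) = T.map (𝟙 (T.obj X)) := (T.map_id _).symm
        _ ≤ T.map (a ≫ T.η.app X) := T_mono _ _ key
        _ = T.map a ≫ T.map (T.η.app X) := T.map_comp _ _
        _ ≤ T.map a ≫ T.η.app (T.obj X) := comp_mono _ _ _ _ le_rfl (KZ X)
    calc T.μ.app X = 𝟙 _ ≫ T.μ.app X := (Category.id_comp _).symm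
      _ ≤ (T.map a ≫ T.η.app (T.obj X)) ≫ T.μ.app X := comp_mono _ _ _ _ h1 le_rfl
      _ = T.map a ≫ (T.η.app (T.obj X) ≫ T.μ.app X) := Category.assoc _ _ _
      _ = T.map a := by simp
  constructor
  · rintro ⟨h1, _h2⟩
    refine ⟨h1, ?_⟩
    calc a ≫ c = T.map c ≫ T.μ.app X := hc
      _ ≤ T.map c ≫ T.map a := comp_mono _ _ _ _ le_rfl muTa
      _ = T.map (c ≫ a) := (T.map_comp _ _).symm
      _ = 𝟙 _ := by simp [h1]
  · rintro ⟨h1, _h2⟩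
    refine ⟨h1, ?_⟩
    have hle : c ≤ T.η.app X := by
      calc c = c ≫ 𝟙 (T.obj X) := (Category.comp_id _).symm
        _ ≤ c ≫ (a ≫ T.η.app X) := comp_mono _ _ _ _ le_rfl key
        _ = (c ≫ a) ≫ T.η.app X := (Category.assoc _ _ _).symm
        _ = T.η.app X := by rw [h1, Category.id_comp]
    apply le_antisymm
    · calc c ≫ T.map (T.η.app X)
          = ((c ≫ a) ≫ c) ≫ T.map (T.η.app X) := by rw [h1, Category.id_comp]
        _ = c ≫ (T.map c ≫ T.μ.app X) ≫ T.map (T.η.app X) := by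
            rw [Category.assoc, ← hc]; simp [Category.assoc]
        _ = c ≫ T.map c ≫ (T.μ.app X ≫ T.map (T.η.app X)) := by
            simp [Category.assoc]
        _ ≤ c ≫ T.map c ≫ 𝟙 _ :=
            comp_mono _ _ _ _ le_rfl (comp_mono _ _ _ _ le_rfl muTeta)
        _ = c ≫ T.map c := by rw [Category.comp_id]
    · exact comp_mono _ _ _ _ le_rfl (T_mono _ _ hle)
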